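/- Let G be a directed acyclic graph on a finite vertex set V satisfying Assumption 1 (A ↦ Y). Suppose W_j ∈ W(G) ∖ O(G) fails the W-criterion, and let (W_{j_1},…,W_{j_r}) be a topological ordering of Ch(W_j,G) ∩ W(G). Then one of the following graphical configurations holds in G: (a) W_{j_s} and W_{j_k} are not adjacent for some s ≠ k in {1,…,r}; (b) there exist k ∈ {1,…,r} and W_i ∈ W(G) with W_i ≠ W_j such that W_j → W_{j_k} ← W_i is in G and W_i ∉ Adj(W_j,G); (c) there exist k ∈ {1,…,r} and W_i ∈ W(G) with W_i ∈ Pa(W_j,G) ∖ Pa(W_{j_k},G), and a path p = ⟨W_i, …, O′⟩ with O′ ∈ O(G) ∖ Pa(W_{j_k},G) that is d-connecting given Pa(W_{j_k},G) (if W_i ∈ O(G) then W_i = O′ and p has length 0). -/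

import Mathlib

open scoped Classical

noncomputable section

namespace Causal

/-- A directed graph on vertex type `V`, given by its edge relation. -/
structure Digraph (V : Type) where
  Edge : V → V → Prop

namespace Digraph

variable {V : Type}

/-- A directed graph is acyclic if there is no directed cycle. -/
def Acyclic (G : Digraph V) : Prop := ∀ v, ¬ Relation.TransGen G.Edge v v

/-- `G.anc u v` : `u` is an ancestor of `v` (`u ↦ v`), i.e. `u = v` or there is a
directed path from `u` to `v`. -/
def anc (G : Digraph V) (u v : V) : Prop := Relation.ReflTransGen G.Edge u v

/-- Parents of a vertex. -/
def paSet (G : Digraph V) (v : V) : Set V := {u | G.Edge u v}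

/-- Children of a vertex. -/
def chSet (G : Digraph V) (v : V) : Set V := {u | G.Edge v u}

/-- Adjacent vertices. -/
def adjSet (G : Digraph V) (v : V) : Set V := G.paSet v ∪ G.chSet v

/-- Ancestors of a vertex (including itself). -/
def anSet (G : Digraph V) (v : V) : Set V := {u | G.anc u v}

/-- Descendants of a vertex (including itself). -/
def deSet (G : Digraph V) (v : V) : Set V := {u | G.anc v u}

/-- Parents of a set of vertices. -/
def paOf (G : Digraph V) (S : Set V) : Set V := ⋃ v ∈ S, G.paSet v

/-- Ancestors of a set of vertices. -/
def anOf (G : Digraph V) (S : Set V) : Set V := ⋃ v ∈ S, G.anSet v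

/-- Descendants of a set of vertices. -/
def deOf (G : Digraph V) (S : Set V) : Set V := ⋃ v ∈ S, G.deSet v

/-- A path in `G` : a sequence of `n+1` distinct vertices, consecutive ones joined by an
edge of `G` in either direction.  Paths in the usual sense have `1 ≤ n`; `n = 0` is the
degenerate one-vertex path. -/
structure GPath (G : Digraph V) where
  n : ℕ
  vert : ℕ → V
  inj : ∀ i j, i ≤ n → j ≤ n → vert i = vert j → i = j
  adj : ∀ i, i < n → G.Edge (vert i) (vert (i + 1)) ∨ G.Edge (vert (i + 1)) (vert i)

namespace GPath

variable {G : Digraph V}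

/-- First vertex of a path. -/
def first (p : G.GPath) : V := p.vert 0

/-- Last vertex of a path. -/
def last (p : G.GPath) : V := p.vert p.n

/-- `v` lies on the path `p`. -/
def Mem (p : G.GPath) (v : V) : Prop := ∃ i, i ≤ p.n ∧ p.vert i = v

/-- The (interior) vertex at position `i` of `p` is a collider: both incident edges on the
path point into it. -/
def IsCollider (p : G.GPath) (i : ℕ) : Prop :=
  0 < i ∧ i < p.n ∧ G.Edge (p.vert (i - 1)) (p.vert i) ∧ G.Edge (p.vert (i + 1)) (p.vert i)

/-- A path is causal if all edges point towards its last vertex. -/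
def Causal (p : G.GPath) : Prop := ∀ i, i < p.n → G.Edge (p.vert i) (p.vert (i + 1))

/-- A path is blocked by `C` if some non-collider on it lies in `C`, or some collider on it
is not an ancestor of `C`. -/
def Blocked (p : G.GPath) (C : Set V) : Prop :=
  (∃ i, 0 < i ∧ i < p.n ∧ ¬ p.IsCollider i ∧ p.vert i ∈ C) ∨
  (∃ i, p.IsCollider i ∧ p.vert i ∉ G.anOf C)

end GPath

/-- d-separation: every path between a vertex of `S \ C` and a vertex of `T \ C` is blocked
by `C`.  It holds by convention when `S \ C` or `T \ C` is empty. -/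
def dsep (G : Digraph V) (S T C : Set V) : Prop :=
  ∀ s ∈ S \ C, ∀ t ∈ T \ C, ∀ p : G.GPath,
    1 ≤ p.n → p.first = s → p.last = t → p.Blocked C

/-- `l` is a topological ordering of the vertex set `S` : it enumerates `S` without
repetitions so that no later vertex is an ancestor of an earlier one. -/
def IsTopoOrd (G : Digraph V) (S : Set V) (l : List V) : Prop :=
  l.Nodup ∧ (∀ v, v ∈ l ↔ v ∈ S) ∧ l.Pairwise fun a b => ¬ G.anc b a

/-- There is a directed path from `u` to `v` avoiding the vertex `A` (a trivial such path
when `u = v`). -/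
def AvoidReach (G : Digraph V) (A u v : V) : Prop :=
  Relation.ReflTransGen (fun a b => G.Edge a b ∧ a ≠ A ∧ b ≠ A) u v

/-- `N(G)` : non-ancestors of the outcome `Y`. -/
def Nset (G : Digraph V) (A Y : V) : Set V := {v | ¬ G.anc v Y}

/-- `I(G)` : indirect ancestors of `Y`, i.e. vertices `v ≠ A` that are ancestors of `Y`
such that every directed path from `v` to `Y` contains `A`. -/
def Iset (G : Digraph V) (A Y : V) : Set V :=
  {v | v ≠ A ∧ G.anc v Y ∧ ¬ G.AvoidReach A v Y}

/-- `W(G)` : baseline covariates. -/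
def Wset (G : Digraph V) (A Y : V) : Set V :=
  {v | ¬ G.anc A v ∧ G.anc v Y ∧ v ∉ G.Iset A Y}

/-- `M(G)` : mediators (including `Y`). -/
def Mset (G : Digraph V) (A Y : V) : Set V := {v | v ≠ A ∧ G.anc A v ∧ G.anc v Y}

/-- `O(G)` : the optimal adjustment set. -/
def Oset (G : Digraph V) (A Y : V) : Set V := G.paOf (G.Mset A Y) \ (G.Mset A Y ∪ {A})

/-- `O_min(G)` : the inclusion-minimal subset `O' ⊆ O(G)` with `A ⫫ O(G) \ O' | O'`
(realized as the intersection of all such subsets). -/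
def Omin (G : Digraph V) (A Y : V) : Set V :=
  ⋂₀ {O' | O' ⊆ G.Oset A Y ∧ G.dsep {A} (G.Oset A Y \ O') O'}

end Digraph

/-- `chainD Wj l t` : the `t`-th element of the chain `(W_{j_0} = Wj, W_{j_1}, …, W_{j_r})`
where `l = [W_{j_1}, …, W_{j_r}]`. -/
def chainD {V : Type} (Wj : V) (l : List V) (t : ℕ) : V := (Wj :: l).getD t Wj

namespace Digraph

variable {V : Type}

/-- The W-criterion for a vertex `Wj ∈ W(G) \ O(G)`. -/
def WCrit (G : Digraph V) (A Y Wj : V) : Prop :=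
  ∀ l : List V, G.IsTopoOrd (G.chSet Wj ∩ G.Wset A Y) l →
    l ≠ [] ∧
      G.dsep {Wj} (G.Oset A Y)
        (insert (chainD Wj l l.length) (G.paSet (chainD Wj l l.length)) \ {Wj}) ∧
      ∀ t, t < l.length →
        G.Edge (chainD Wj l t) (chainD Wj l (t + 1)) ∧
        G.paSet (chainD Wj l (t + 1)) ⊆ insert (chainD Wj l t) (G.paSet (chainD Wj l t)) ∧
        G.dsep (G.paSet (chainD Wj l t) \ G.paSet (chainD Wj l (t + 1))) (G.Oset A Y)
          (G.paSet (chainD Wj l (t + 1)))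

/-- The M-criterion for a vertex `Mi ∈ M(G) \ {Y}`. -/
def MCrit (G : Digraph V) (A Y Mi : V) : Prop :=
  ∀ l : List V, G.IsTopoOrd (G.chSet Mi ∩ G.Mset A Y) l →
    l ≠ [] ∧
      G.dsep {Mi} (insert A (insert Y (G.Omin A Y)))
        (insert (chainD Mi l l.length) (G.paSet (chainD Mi l l.length)) \ {Mi}) ∧
      ∀ t, t < l.length →
        G.Edge (chainD Mi l t) (chainD Mi l (t + 1)) ∧
        G.paSet (chainD Mi l (t + 1)) ⊆ insert (chainD Mi l t) (G.paSet (chainD Mi l t)) ∧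
        G.dsep (G.paSet (chainD Mi l t) \ G.paSet (chainD Mi l (t + 1)))
          (insert A (insert Y (G.Omin A Y))) (G.paSet (chainD Mi l (t + 1)))

/-- `V*(G)` : the irreducible informative vertex set. -/
def Vstar (G : Digraph V) (A Y : V) : Set V :=
  insert A (insert Y (G.Oset A Y ∪
    {w | w ∈ G.Wset A Y ∧ w ∉ G.Oset A Y ∧ ¬ G.WCrit A Y w} ∪
    {m | m ∈ G.Mset A Y ∧ m ≠ Y ∧ ¬ G.MCrit A Y m}))

/-- The projection `G_{−v,π}` : saturate all edges from `Pa(v,G) ∪ {v, π_1, …, π_{j−1}}`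
into `π_j`, then delete `v` and its incident edges. -/
def proj (G : Digraph V) (v : V) (π : List V) : Digraph V where
  Edge a b :=
    a ≠ v ∧ b ≠ v ∧
      (G.Edge a b ∨ ∃ j, j < π.length ∧ b = π.getD j v ∧
        (G.Edge a v ∨ ∃ j', j' < j ∧ a = π.getD j' v))

/-- There is a directed path from `u` to `v` all of whose non-endpoint vertices lie
in `I` (this includes a plain edge `u → v`). -/
def connVia (G : Digraph V) (I : Set V) (u v : V) : Prop :=
  ∃ w, Relation.ReflTransGen (fun a b => G.Edge a b ∧ b ∈ I) u w ∧ G.Edge w v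

/-- The reduced graph `G⁰` on `V⁰ = V \ (N(G) ∪ I(G))` : connect across `I(G)` and delete
the vertices of `N(G) ∪ I(G)`. -/
def reduce0 (G : Digraph V) (A Y : V) : Digraph V where
  Edge u v :=
    u ∉ G.Nset A Y ∪ G.Iset A Y ∧ v ∉ G.Nset A Y ∪ G.Iset A Y ∧
      G.connVia (G.Iset A Y) u v

/-- The induced subgraph on a vertex set `S`. -/
def induce (G : Digraph V) (S : Set V) : Digraph {v // v ∈ S} where
  Edge a b := G.Edge a.1 b.1

/-- `π` is the projection ordering used when projecting `v` out of the current graph `H`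
(vertex classes taken with respect to the reference graph `Gref`): for `v ∈ W(Gref)` it is a
topological ordering of the children of `v` in `H` lying in `W(Gref)`, followed by `A` if `A`
is a child of `v` in `H`; for `v ∈ M(Gref)` it is a topological ordering of all children
of `v` in `H`. -/
def PiOrd (Gref : Digraph V) (A Y : V) (H : Digraph V) (v : V) (π : List V) : Prop :=
  (v ∈ Gref.Wset A Y ∧
    ∃ l, H.IsTopoOrd (H.chSet v ∩ Gref.Wset A Y) l ∧
      π = l ++ if H.Edge v A then [A] else []) ∨
  (v ∈ Gref.Mset A Y ∧ H.IsTopoOrd (H.chSet v) π)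

/-- One step of the graph-reduction algorithm: visit `v` in the current graph `H`; if `v`
satisfies the W- (resp. M-) criterion in `G` it is projected out, otherwise nothing happens. -/
def AlgStep (G : Digraph V) (A Y : V) (H : Digraph V) (v : V) (H' : Digraph V) : Prop :=
  (v ∈ G.Wset A Y ∧ G.WCrit A Y v ∧
    ∃ l, H.IsTopoOrd (H.chSet v ∩ G.Wset A Y) l ∧
      H' = H.proj v (l ++ if H.Edge v A then [A] else [])) ∨
  (v ∈ G.Mset A Y ∧ G.MCrit A Y v ∧
    ∃ l, H.IsTopoOrd (H.chSet v) l ∧ H' = H.proj v l) ∨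
  (¬ (v ∈ G.Wset A Y ∧ G.WCrit A Y v) ∧ ¬ (v ∈ G.Mset A Y ∧ G.MCrit A Y v) ∧ H' = H)

/-- A run of the graph-reduction algorithm through the list of vertices `l`. -/
inductive AlgRun (G : Digraph V) (A Y : V) : Digraph V → List V → Digraph V → Prop
  | nil (H : Digraph V) : AlgRun G A Y H [] H
  | cons {H H' H'' : Digraph V} {v : V} {l : List V} :
      G.AlgStep A Y H v H' → AlgRun G A Y H' l H'' → AlgRun G A Y H (v :: l) H''

/-- `H` is an output of the graph-reduction algorithm applied to `G` : starting from the
reduced graph `G⁰`, visit each vertex of `V⁰ \ ({A,Y} ∪ O(G))` exactly once, in any order. -/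
def IsAlgOutput (G : Digraph V) (A Y : V) (H : Digraph V) : Prop :=
  ∃ l : List V, l.Nodup ∧
    (∀ v, v ∈ l ↔ (v ∉ G.Nset A Y ∪ G.Iset A Y ∧ v ∉ insert A (insert Y (G.Oset A Y)))) ∧
    G.AlgRun A Y (G.reduce0 A Y) l H

/-- Markov equivalence: same adjacencies and the same unshielded colliders. -/
def MarkovEquiv (G G' : Digraph V) : Prop :=
  (∀ u v, u ∈ G.adjSet v ↔ u ∈ G'.adjSet v) ∧
  ∀ u w v, (G.Edge u w ∧ G.Edge v w ∧ u ≠ v ∧ u ∉ G.adjSet v) ↔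
    (G'.Edge u w ∧ G'.Edge v w ∧ u ≠ v ∧ u ∉ G'.adjSet v)

end Digraph

/-- `p` is a shortest causal path from `v` to the set `S` (of length `0` if `v ∈ S`). -/
def IsShortestCausalTo {V : Type} (G : Digraph V) (p : G.GPath) (v : V) (S : Set V) : Prop :=
  p.Causal ∧ p.first = v ∧ p.last ∈ S ∧
    ∀ q : G.GPath, q.Causal → q.first = v → q.last ∈ S → p.n ≤ q.n

/-- Length of a shortest causal path from `v` to the set `D`. -/
def causalDist {V : Type} (G : Digraph V) (v : V) (D : Set V) : ℕ :=
  sInf {n | ∃ q : G.GPath, q.Causal ∧ q.first = v ∧ q.last ∈ D ∧ q.n = n}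

/-- The distance-to-`D` of a path: the sum over its colliders `C_h` of `|c_h| + 1`, where
`c_h` is a shortest causal path from `C_h` to `D`. -/
def Digraph.GPath.distTo {V : Type} {G : Digraph V} (p : G.GPath) (D : Set V) : ℕ :=
  ∑ i ∈ Finset.range (p.n + 1),
    if p.IsCollider i then causalDist G (p.vert i) D + 1 else 0

/-- A `Fintype` instance for subtypes of sets over a finite type. -/
noncomputable instance instFintypeMemSet {α : Type} [Finite α] (S : Set α) :
    Fintype {x // x ∈ S} := Set.Finite.fintype (Set.toFinite S)


-- ===== auxiliary lemmas =====
namespace Digraph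

variable {V : Type} {G : Digraph V}

lemma Acyclic.no_self (hG : G.Acyclic) {a : V} (h : G.Edge a a) : False :=
  hG a (Relation.TransGen.single h)

lemma Acyclic.no_two (hG : G.Acyclic) {a b : V} (h1 : G.Edge a b) (h2 : G.Edge b a) : False :=
  hG a (Relation.TransGen.head' h1 (Relation.ReflTransGen.single h2))

lemma Acyclic.not_edge_of_anc (hG : G.Acyclic) {a b : V} (h : G.anc a b) (he : G.Edge b a) :
    False :=
  hG b (Relation.TransGen.trans_left (Relation.TransGen.single he) h)

lemma Acyclic.anc_antisymm (hG : G.Acyclic) {a b : V} (h1 : G.anc a b) (h2 : G.anc b a) :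
    a = b := by
  rcases Relation.ReflTransGen.cases_head h1 with h | ⟨c, hac, hcb⟩
  · exact h
  · exact absurd (Relation.TransGen.trans_left (Relation.TransGen.head' hac hcb) h2) (hG a)

lemma anc_refl (G : Digraph V) (a : V) : G.anc a a := Relation.ReflTransGen.refl

lemma anc_of_edge {a b : V} (h : G.Edge a b) : G.anc a b := Relation.ReflTransGen.single h

lemma anc_trans {a b c : V} (h1 : G.anc a b) (h2 : G.anc b c) : G.anc a c := h1.trans h2

lemma avoidSeg {A x w : V} (h : G.anc x w) (hw : ¬ G.anc A w) : G.AvoidReach A x w := by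
  induction h using Relation.ReflTransGen.head_induction_on with
  | refl => exact Relation.ReflTransGen.refl
  | head hab hbw ih =>
    rename_i a c
    refine Relation.ReflTransGen.head ⟨hab, ?_, ?_⟩ ih
    · rintro rfl; exact hw (Relation.ReflTransGen.head hab hbw)
    · rintro rfl; exact hw hbw

lemma avoidReach_anc {A x w : V} (h : G.AvoidReach A x w) : G.anc x w :=
  by
  induction h with
  | refl => exact Relation.ReflTransGen.refl
  | tail _ hbc ih => exact ih.tail hbc.1

lemma W_avoid {A Y w : V} (hw : w ∈ G.Wset A Y) : G.AvoidReach A w Y := by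
  obtain ⟨h1, h2, h3⟩ := hw
  by_contra hav
  exact h3 ⟨fun h => h1 (h ▸ Relation.ReflTransGen.refl), h2, hav⟩

lemma W_ne_A {A Y w : V} (hw : w ∈ G.Wset A Y) : w ≠ A := by
  rintro rfl; exact hw.1 (Relation.ReflTransGen.refl)

lemma W_of_anc_W {A Y x w : V} (hxw : G.anc x w) (hw : w ∈ G.Wset A Y)
    (hx : ¬ G.anc A x) : x ∈ G.Wset A Y := by
  refine ⟨hx, hxw.trans hw.2.1, ?_⟩
  intro ⟨_, _, h3⟩
  exact h3 ((avoidSeg hxw hw.1).trans (W_avoid hw))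

lemma W_of_parent {A Y p v : V} (he : G.Edge p v) (hv : v ∈ G.Wset A Y) :
    p ∈ G.Wset A Y :=
  W_of_anc_W (anc_of_edge he) hv (fun h => hv.1 (h.trans (anc_of_edge he)))

lemma avoid_of_not_anc_A {A Y x : V} (h : G.anc x Y) : ¬ G.anc x A → G.AvoidReach A x Y := by
  induction h using Relation.ReflTransGen.head_induction_on with
  | refl => intro _; exact Relation.ReflTransGen.refl
  | head hab hbw ih =>
    rename_i a c
    intro ha
    have hc : ¬ G.anc c A := fun h => ha (Relation.ReflTransGen.head hab h)
    refine Relation.ReflTransGen.head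
      ⟨hab, fun hA => ha (hA ▸ Relation.ReflTransGen.refl),
        fun hA => hc (hA ▸ Relation.ReflTransGen.refl)⟩ (ih hc)

lemma M_avoid (hG : G.Acyclic) {A Y m : V} (hm : m ∈ G.Mset A Y) : G.AvoidReach A m Y := by
  obtain ⟨h1, h2, h3⟩ := hm
  refine avoid_of_not_anc_A h3 (fun h => h1 (hG.anc_antisymm h h2))

lemma O_sub_W (hG : G.Acyclic) {A Y : V} (G' : Unit) : G.Oset A Y ⊆ G.Wset A Y := by
  rintro v ⟨hpa, hnot⟩
  simp only [Oset, paOf, Set.mem_iUnion] at hpa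
  obtain ⟨m, hm, hedge⟩ := hpa
  have hvm : v ∉ G.Mset A Y ∧ v ≠ A := by
    constructor
    · intro h; exact hnot (Or.inl h)
    · intro h; exact hnot (Or.inr h)
  have hedge' : G.Edge v m := hedge
  have hancA : ¬ G.anc A v := by
    intro h
    exact hvm.1 ⟨hvm.2, h, (anc_of_edge hedge').trans hm.2.2⟩
  refine ⟨hancA, (anc_of_edge hedge').trans hm.2.2, ?_⟩
  intro ⟨_, _, h3⟩
  refine h3 (Relation.ReflTransGen.head ⟨hedge', hvm.2, hm.1⟩ (M_avoid hG hm))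

lemma O_mem_intro (hG : G.Acyclic) {A Y w m : V} (hm : m ∈ G.Mset A Y)
    (hedge : G.Edge w m) (hwm : w ∉ G.Mset A Y) (hwA : w ≠ A) : w ∈ G.Oset A Y := by
  constructor
  · simp only [paOf, Set.mem_iUnion]
    exact ⟨m, hm, hedge⟩
  · rintro (h | h)
    · exact hwm h
    · exact hwA h

end Digraph
-- ===== end batch 1 =====

-- ===== batch 2: path machinery =====
namespace Digraph

variable {V : Type} {G : Digraph V}

/-- Trivial one-vertex path. -/
def zeroPath (G : Digraph V) (x : V) : G.GPath where
  n := 0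
  vert := fun _ => x
  inj := fun i j hi hj _ => by omega
  adj := fun i hi => absurd hi (Nat.not_lt_zero i)

lemma not_blocked_of_le_one {p : G.GPath} (h : p.n ≤ 1) (C : Set V) : ¬ p.Blocked C := by
  rintro (⟨i, h1, h2, _, _⟩ | ⟨i, ⟨h1, h2, _, _⟩, _⟩) <;> omega

/-- Drop the first `k` vertices of a path. -/
def GPath.dropPath (p : G.GPath) (k : ℕ) (hk : k ≤ p.n) : G.GPath where
  n := p.n - k
  vert := fun i => p.vert (k + i)
  inj := fun i j hi hj h => by
    have := p.inj (k + i) (k + j) (by omega) (by omega) h; omega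
  adj := fun i hi => by
    have := p.adj (k + i) (by omega)
    have e : k + i + 1 = k + (i + 1) := by omega
    rwa [e] at this

lemma GPath.dropPath_n (p : G.GPath) (k : ℕ) (hk : k ≤ p.n) :
    (p.dropPath k hk).n = p.n - k := rfl

lemma GPath.dropPath_vert (p : G.GPath) (k : ℕ) (hk : k ≤ p.n) (i : ℕ) :
    (p.dropPath k hk).vert i = p.vert (k + i) := rfl

lemma isCollider_drop {p : G.GPath} {k i : ℕ} (hk : k ≤ p.n) (h0 : 0 < i) :
    (p.dropPath k hk).IsCollider i ↔ p.IsCollider (k + i) := by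
  have e1 : k + (i - 1) = k + i - 1 := by omega
  have e2 : k + (i + 1) = k + i + 1 := by omega
  constructor
  · rintro ⟨a, b, c, d⟩
    have hb : i < p.n - k := b
    refine ⟨by omega, by omega, ?_, ?_⟩
    · rw [← e1]; exact c
    · rw [← e2]; exact d
  · rintro ⟨a, b, c, d⟩
    refine ⟨h0, show i < p.n - k by omega, ?_, ?_⟩
    · show G.Edge (p.vert (k + (i - 1))) (p.vert (k + i)); rw [e1]; exact c
    · show G.Edge (p.vert (k + (i + 1))) (p.vert (k + i)); rw [e2]; exact d

/-- Keep only the first `k` edges of a path. -/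
def GPath.takePath (p : G.GPath) (k : ℕ) (hk : k ≤ p.n) : G.GPath where
  n := k
  vert := p.vert
  inj := fun i j hi hj h => p.inj i j (le_trans hi hk) (le_trans hj hk) h
  adj := fun i hi => p.adj i (lt_of_lt_of_le hi hk)

/-- Prepend a vertex to a path. -/
def prependPath (x : V) (p : G.GPath)
    (hx : ∀ i, i ≤ p.n → p.vert i ≠ x)
    (he : G.Edge x (p.vert 0) ∨ G.Edge (p.vert 0) x) : G.GPath where
  n := p.n + 1
  vert := fun i => if i = 0 then x else p.vert (i - 1)
  inj := fun i j hi hj h => by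
    by_cases h1 : i = 0 <;> by_cases h2 : j = 0 <;> simp [h1, h2] at h ⊢
    · exact absurd h.symm (hx (j - 1) (by omega))
    · exact absurd h (hx (i - 1) (by omega))
    · have := p.inj (i - 1) (j - 1) (by omega) (by omega) h; omega
  adj := fun i hi => by
    by_cases h1 : i = 0
    · subst h1; simpa using he
    · have := p.adj (i - 1) (by omega)
      have e : i - 1 + 1 = i := by omega
      rw [e] at this
      simp only [if_neg h1, if_neg (by omega : ¬ i + 1 = 0)]
      simpa [e] using this

lemma prependPath_vert_succ (x : V) (p : G.GPath) (hx) (he) (i : ℕ) (hi : i ≠ 0) :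
    (prependPath x p hx he).vert i = p.vert (i - 1) := by
  simp [prependPath, hi]

/-- There is an injective `r`-path realizing reflexive-transitive reachability. -/
lemma exists_rPath (r : V → V → Prop) (hr : ∀ a b, r a b → G.Edge a b)
    {x y : V} (h : Relation.ReflTransGen r x y) :
    ∃ p : G.GPath, p.first = x ∧ p.last = y ∧
      ∀ i, i < p.n → r (p.vert i) (p.vert (i + 1)) := by
  induction h using Relation.ReflTransGen.head_induction_on with
  | refl => exact ⟨G.zeroPath y, rfl, rfl, fun i hi => absurd hi (Nat.not_lt_zero i)⟩
  | head hab hbw ih =>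
    rename_i a c
    obtain ⟨p, hf, hl, hcaus⟩ := ih
    have hf0 : p.vert 0 = c := hf
    have hln : p.vert p.n = y := hl
    by_cases hmem : ∃ i, i ≤ p.n ∧ p.vert i = a
    · obtain ⟨i, hi, hvi⟩ := hmem
      refine ⟨p.dropPath i hi, ?_, ?_, ?_⟩
      · show p.vert (i + 0) = a
        simpa using hvi
      · show p.vert (i + (p.n - i)) = y
        have e : i + (p.n - i) = p.n := by omega
        rw [e]; exact hln
      · intro j hj
        have hj' : j < p.n - i := hj
        show r (p.vert (i + j)) (p.vert (i + (j + 1)))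
        have e : i + (j + 1) = (i + j) + 1 := by omega
        rw [e]
        exact hcaus (i + j) (by omega)
    · push_neg at hmem
      have hedge : G.Edge a (p.vert 0) ∨ G.Edge (p.vert 0) a := by
        left; rw [hf0]; exact hr _ _ hab
      refine ⟨prependPath a p hmem hedge, by simp [prependPath, GPath.first], ?_, ?_⟩
      · show (prependPath a p hmem hedge).vert (p.n + 1) = y
        rw [prependPath_vert_succ a p hmem hedge (p.n + 1) (by omega)]
        simpa using hln
      · intro i hi
        have hi' : i < p.n + 1 := hi
        by_cases h1 : i = 0
        · subst h1
          show r ((prependPath a p hmem hedge).vert 0) ((prependPath a p hmem hedge).vert 1)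
          rw [prependPath_vert_succ a p hmem hedge 1 (by omega)]
          show r (if (0:ℕ) = 0 then a else p.vert (0 - 1)) (p.vert (1 - 1))
          simpa [hf0] using hab
        · rw [prependPath_vert_succ a p hmem hedge i h1,
            prependPath_vert_succ a p hmem hedge (i + 1) (by omega)]
          have e : i + 1 - 1 = (i - 1) + 1 := by omega
          rw [e]
          exact hcaus (i - 1) (by omega)

/-- Reachability along a forward-directed initial segment of a path. -/
lemma rtg_of_causal (p : G.GPath) (r : V → V → Prop) {m : ℕ}
    (hc : ∀ i, i < m → r (p.vert i) (p.vert (i + 1))) :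
    ∀ i j, i ≤ j → j ≤ m → Relation.ReflTransGen r (p.vert i) (p.vert j) := by
  intro i j hij hjm
  induction j with
  | zero =>
    have : i = 0 := by omega
    subst this; exact Relation.ReflTransGen.refl
  | succ j ih =>
    rcases Nat.eq_or_lt_of_le hij with h | h
    · subst h; exact Relation.ReflTransGen.refl
    · exact Relation.ReflTransGen.tail (ih (by omega) (by omega)) (hc j (by omega))

lemma not_isCollider_of_causal (hG : G.Acyclic) {p : G.GPath}
    (hc : ∀ i, i < p.n → G.Edge (p.vert i) (p.vert (i + 1))) (i : ℕ) :
    ¬ p.IsCollider i := by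
  rintro ⟨h1, h2, h3, h4⟩
  exact hG.no_two (hc i h2) h4

end Digraph
-- ===== end batch 2 =====

-- ===== batch 3 =====
namespace Digraph

variable {V : Type} {G : Digraph V}

lemma mem_adjSet_iff {u v : V} : u ∈ G.adjSet v ↔ G.Edge u v ∨ G.Edge v u := Iff.rfl

/-- A directed path from a W-vertex to the optimal adjustment set. -/
lemma exists_cpath (hG : G.Acyclic) {A Y v : V} (hAY : A ≠ Y) (hA : G.anc A Y)
    (hv : v ∈ G.Wset A Y) :
    ∃ q : G.GPath, (∀ i, i < q.n → G.Edge (q.vert i) (q.vert (i + 1))) ∧ q.first = v ∧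
      q.last ∈ G.Oset A Y ∧ (∀ i, i ≤ q.n → G.anc v (q.vert i)) := by
  obtain ⟨q, hqf, hql, hcaus⟩ := exists_rPath
    (fun a b => G.Edge a b ∧ a ≠ A ∧ b ≠ A) (fun a b h => h.1) (W_avoid hv)
  have hYM : Y ∈ G.Mset A Y := ⟨hAY.symm, hA, Relation.ReflTransGen.refl⟩
  have hq0 : q.vert 0 = v := hqf
  have hqn : q.vert q.n = Y := hql
  have hex : ∃ m, m ≤ q.n ∧ q.vert m ∈ G.Mset A Y := ⟨q.n, le_refl _, by rw [hqn]; exact hYM⟩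
  classical
  set m := Nat.find hex with hm_def
  obtain ⟨hmn, hmM⟩ := Nat.find_spec hex
  rw [← hm_def] at hmn hmM
  have hm1 : 1 ≤ m := by
    rcases Nat.eq_zero_or_pos m with h | h
    · exfalso
      rw [h, hq0] at hmM
      exact hv.1 hmM.2.1
    · exact h
  have hne_A : ∀ i, i ≤ q.n → q.vert i ≠ A := by
    intro i hi
    rcases Nat.eq_zero_or_pos i with h | h
    · rw [h, hq0]; exact W_ne_A hv
    · have := hcaus (i - 1) (by omega)
      have e : i - 1 + 1 = i := by omega
      rw [e] at this
      exact this.2.2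
  have hcausE : ∀ i, i < q.n → G.Edge (q.vert i) (q.vert (i + 1)) := fun i hi => (hcaus i hi).1
  refine ⟨q.takePath (m - 1) (by omega), ?_, ?_, ?_, ?_⟩
  · intro i hi
    have hi' : i < m - 1 := hi
    exact hcausE i (by omega)
  · exact hq0
  · show q.vert (m - 1) ∈ G.Oset A Y
    have hedge : G.Edge (q.vert (m - 1)) (q.vert m) := by
      have := hcausE (m - 1) (by omega)
      have e : m - 1 + 1 = m := by omega
      rwa [e] at this
    have hnotM : q.vert (m - 1) ∉ G.Mset A Y := by
      intro hmem
      exact Nat.find_min hex (by omega : m - 1 < m) ⟨by omega, hmem⟩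
    exact O_mem_intro hG hmM hedge hnotM (hne_A (m - 1) (by omega))
  · intro i hi
    have hi' : i ≤ m - 1 := hi
    have := rtg_of_causal q G.Edge (m := q.n)
      (fun i hi => hcausE i hi) 0 i (by omega) (by omega)
    rwa [hq0] at this

/-- Uniqueness of topological orderings of a set of pairwise adjacent vertices. -/
lemma topo_unique (hG : G.Acyclic) :
    ∀ (l l' : List V) (S : Set V),
      (∀ a ∈ S, ∀ b ∈ S, a ≠ b → G.Edge a b ∨ G.Edge b a) →
      G.IsTopoOrd S l → G.IsTopoOrd S l' → l = l' := by
  intro l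
  induction l with
  | nil =>
    intro l' S hadj h1 h2
    cases l' with
    | nil => rfl
    | cons x t =>
      exfalso
      have : x ∈ S := (h2.2.1 x).mp (List.mem_cons_self)
      have : x ∈ ([] : List V) := (h1.2.1 x).mpr this
      simp at this
  | cons x t ih =>
    intro l' S hadj h1 h2
    cases l' with
    | nil =>
      exfalso
      have : x ∈ S := (h1.2.1 x).mp (List.mem_cons_self)
      have : x ∈ ([] : List V) := (h2.2.1 x).mpr this
      simp at this
    | cons x' t' =>
      have hxS : x ∈ S := (h1.2.1 x).mp (List.mem_cons_self)
      have hx'S : x' ∈ S := (h2.2.1 x').mp (List.mem_cons_self)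
      have hxx : x = x' := by
        by_contra hne
        have hxt' : x ∈ t' := by
          have := (h2.2.1 x).mpr hxS
          rcases List.mem_cons.mp this with h | h
          · exact absurd h hne
          · exact h
        have hx't : x' ∈ t := by
          have := (h1.2.1 x').mpr hx'S
          rcases List.mem_cons.mp this with h | h
          · exact absurd h.symm hne
          · exact h
        have hp1 : ¬ G.anc x' x := (List.pairwise_cons.mp h1.2.2).1 x' hx't
        have hp2 : ¬ G.anc x x' := (List.pairwise_cons.mp h2.2.2).1 x hxt'
        rcases hadj x hxS x' hx'S hne with h | h
        · exact hp2 (anc_of_edge h)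
        · exact hp1 (anc_of_edge h)
      subst hxx
      have hxt : x ∉ t := (List.nodup_cons.mp h1.1).1
      have hxt' : x ∉ t' := (List.nodup_cons.mp h2.1).1
      have ht : G.IsTopoOrd (S \ {x}) t := by
        refine ⟨(List.nodup_cons.mp h1.1).2, ?_, (List.pairwise_cons.mp h1.2.2).2⟩
        intro v
        constructor
        · intro hv
          refine ⟨(h1.2.1 v).mp (List.mem_cons_of_mem x hv), ?_⟩
          rintro rfl; exact hxt hv
        · rintro ⟨hv, hvx⟩
          rcases List.mem_cons.mp ((h1.2.1 v).mpr hv) with h | h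
          · exact absurd h hvx
          · exact h
      have ht' : G.IsTopoOrd (S \ {x}) t' := by
        refine ⟨(List.nodup_cons.mp h2.1).2, ?_, (List.pairwise_cons.mp h2.2.2).2⟩
        intro v
        constructor
        · intro hv
          refine ⟨(h2.2.1 v).mp (List.mem_cons_of_mem x hv), ?_⟩
          rintro rfl; exact hxt' hv
        · rintro ⟨hv, hvx⟩
          rcases List.mem_cons.mp ((h2.2.1 v).mpr hv) with h | h
          · exact absurd h hvx
          · exact h
      have := ih t' (S \ {x}) (fun a ha b hb hne => hadj a ha.1 b hb.1 hne) ht ht'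
      rw [this]

end Digraph
-- ===== end batch 3 =====

-- ===== batch 4 =====
namespace Digraph

variable {V : Type} {G : Digraph V} {A Y Wj : V} {l : List V}

/-- Negation of configuration (a). -/
def Hna (G : Digraph V) (Wj : V) (l : List V) : Prop :=
  ∀ s, s < l.length → ∀ k, k < l.length → s ≠ k → l.getD s Wj ∈ G.adjSet (l.getD k Wj)

/-- Negation of configuration (b). -/
def Hnb (G : Digraph V) (A Y Wj : V) (l : List V) : Prop :=
  ∀ k, k < l.length → ∀ Wi, Wi ∈ G.Wset A Y → Wi ≠ Wj → G.Edge Wj (l.getD k Wj) →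
    G.Edge Wi (l.getD k Wj) → Wi ∈ G.adjSet Wj

/-- Negation of configuration (c). -/
def Hnc (G : Digraph V) (A Y Wj : V) (l : List V) : Prop :=
  ∀ k, k < l.length → ∀ Wi, Wi ∈ G.Wset A Y → Wi ∈ G.paSet Wj \ G.paSet (l.getD k Wj) →
    ∀ p : G.GPath, p.first = Wi → p.last ∈ G.Oset A Y \ G.paSet (l.getD k Wj) →
      p.Blocked (G.paSet (l.getD k Wj))

lemma chainD_zero : chainD Wj l 0 = Wj := rfl

lemma chainD_succ (t : ℕ) : chainD Wj l (t + 1) = l.getD t Wj := by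
  simp [chainD]

lemma chainD_pred {t : ℕ} (h : 0 < t) : chainD Wj l t = l.getD (t - 1) Wj := by
  cases t with
  | zero => omega
  | succ t => rw [chainD_succ]; simp

lemma topo_mem_iff (hl : G.IsTopoOrd (G.chSet Wj ∩ G.Wset A Y) l) {v : V} :
    v ∈ l ↔ G.Edge Wj v ∧ v ∈ G.Wset A Y := hl.2.1 v

lemma topo_getD_mem (hl : G.IsTopoOrd (G.chSet Wj ∩ G.Wset A Y) l) {s : ℕ}
    (hs : s < l.length) : l.getD s Wj ∈ l := by
  rw [List.getD_eq_getElem l Wj hs]; exact List.getElem_mem hs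

lemma topo_mem_W (hl : G.IsTopoOrd (G.chSet Wj ∩ G.Wset A Y) l) {s : ℕ}
    (hs : s < l.length) : l.getD s Wj ∈ G.Wset A Y :=
  ((topo_mem_iff hl).mp (topo_getD_mem hl hs)).2

lemma topo_edge (hl : G.IsTopoOrd (G.chSet Wj ∩ G.Wset A Y) l) {s : ℕ}
    (hs : s < l.length) : G.Edge Wj (l.getD s Wj) :=
  ((topo_mem_iff hl).mp (topo_getD_mem hl hs)).1

lemma topo_not_anc (hl : G.IsTopoOrd (G.chSet Wj ∩ G.Wset A Y) l) {s k : ℕ}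
    (hsk : s < k) (hk : k < l.length) : ¬ G.anc (l.getD k Wj) (l.getD s Wj) := by
  have hs : s < l.length := lt_trans hsk hk
  rw [List.getD_eq_getElem l Wj hs, List.getD_eq_getElem l Wj hk]
  exact List.pairwise_iff_getElem.mp hl.2.2 s k hs hk hsk

lemma topo_ne (hl : G.IsTopoOrd (G.chSet Wj ∩ G.Wset A Y) l) {s k : ℕ}
    (hs : s < l.length) (hk : k < l.length) (hne : s ≠ k) :
    l.getD s Wj ≠ l.getD k Wj := by
  rw [List.getD_eq_getElem l Wj hs, List.getD_eq_getElem l Wj hk]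
  intro h
  exact hne ((List.Nodup.getElem_inj_iff hl.1).mp h)

lemma topo_index (hl : G.IsTopoOrd (G.chSet Wj ∩ G.Wset A Y) l) {v : V} (hv : v ∈ l) :
    ∃ s, s < l.length ∧ l.getD s Wj = v := by
  obtain ⟨s, hs, h⟩ := List.mem_iff_getElem.mp hv
  exact ⟨s, hs, by rw [List.getD_eq_getElem l Wj hs]; exact h⟩

lemma hna_edge (hG : G.Acyclic) (hl : G.IsTopoOrd (G.chSet Wj ∩ G.Wset A Y) l)
    (hna : Hna G Wj l) {s k : ℕ} (hsk : s < k) (hk : k < l.length) :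
    G.Edge (l.getD s Wj) (l.getD k Wj) := by
  have hs : s < l.length := lt_trans hsk hk
  rcases hna s hs k hk (by omega) with h | h
  · exact h
  · exact absurd (anc_of_edge h) (topo_not_anc hl hsk hk)

/-- Key chain property of parent sets, from ¬(a), ¬(b), ¬(c). -/
lemma paChain (hG : G.Acyclic) (hAY : A ≠ Y) (hA : G.anc A Y)
    (hWj : Wj ∈ G.Wset A Y \ G.Oset A Y)
    (hl : G.IsTopoOrd (G.chSet Wj ∩ G.Wset A Y) l)
    (hna : Hna G Wj l) (hnb : Hnb G A Y Wj l) (hnc : Hnc G A Y Wj l) :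
    ∀ t, t < l.length → ∀ p ∈ G.paSet (l.getD t Wj),
      p ∈ insert (chainD Wj l t) (G.paSet (chainD Wj l t)) := by
  intro t ht p hp
  have hp' : G.Edge p (l.getD t Wj) := hp
  have hLtW : l.getD t Wj ∈ G.Wset A Y := topo_mem_W hl ht
  have hpW : p ∈ G.Wset A Y := W_of_parent hp' hLtW
  by_cases hpWj : p = Wj
  · subst hpWj
    rcases Nat.eq_zero_or_pos t with h0 | h0
    · subst h0; exact Set.mem_insert _ _
    · refine Set.mem_insert_iff.mpr (Or.inr ?_)
      have e : t = (t - 1) + 1 := by omega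
      rw [e, chainD_succ]
      exact topo_edge hl (by omega)
  by_cases hpCh : G.Edge Wj p
  · obtain ⟨u, hu, huv⟩ := topo_index hl ((topo_mem_iff hl).mpr ⟨hpCh, hpW⟩)
    have hut : u ≠ t := by
      rintro rfl
      rw [huv] at hp'
      exact hG.no_self hp'
    have hult : u < t := by
      rcases Nat.lt_or_ge u t with h | h
      · exact h
      · exfalso
        refine topo_not_anc hl (show t < u by omega) hu ?_
        rw [huv]; exact anc_of_edge hp'
    have ht1 : t = (t - 1) + 1 := by omega
    rcases Nat.lt_or_ge u (t - 1) with h | h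
    · refine Set.mem_insert_iff.mpr (Or.inr ?_)
      rw [ht1, chainD_succ]
      rw [← huv]
      exact hna_edge hG hl hna h (by omega)
    · have : u = t - 1 := by omega
      subst this
      refine Set.mem_insert_iff.mpr (Or.inl ?_)
      rw [ht1, chainD_succ, huv]
  by_cases hpPa : G.Edge p Wj
  · rcases Nat.eq_zero_or_pos t with h0 | h0
    · subst h0
      exact Set.mem_insert_iff.mpr (Or.inr hpPa)
    by_cases hpt : G.Edge p (l.getD (t - 1) Wj)
    · refine Set.mem_insert_iff.mpr (Or.inr ?_)
      have e : t = (t - 1) + 1 := by omega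
      rw [e, chainD_succ]
      exact hpt
    · exfalso
      -- configuration (c) via a causal path from p through l[t] down to O
      obtain ⟨q, hqcaus, hqf, hqO, hqanc⟩ := exists_cpath hG hAY hA hLtW
      have hq0 : q.vert 0 = l.getD t Wj := hqf
      have hq_not : ∀ i, i ≤ q.n → q.vert i ≠ p := by
        intro i hi heq
        exact hG.not_edge_of_anc (heq ▸ hqanc i hi) hp'
      have hedge0 : G.Edge p (q.vert 0) ∨ G.Edge (q.vert 0) p := Or.inl (by rw [hq0]; exact hp')
      set P := prependPath p q hq_not hedge0 with hP
      have hPn : P.n = q.n + 1 := rfl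
      have hPvert : ∀ i, i ≠ 0 → P.vert i = q.vert (i - 1) := fun i hi =>
        prependPath_vert_succ p q hq_not hedge0 i hi
      have hPfirst : P.first = p := by simp [hP, prependPath, GPath.first]
      have hPcaus : ∀ i, i < P.n → G.Edge (P.vert i) (P.vert (i + 1)) := by
        intro i hi
        rcases Nat.eq_zero_or_pos i with h | h
        · subst h
          rw [hPvert 1 (by omega)]
          show G.Edge (P.vert 0) (q.vert 0)
          rw [show P.vert 0 = p from hPfirst, hq0]
          exact hp'
        · rw [hPvert i (by omega), hPvert (i + 1) (by omega)]
          have e : i + 1 - 1 = (i - 1) + 1 := by omega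
          rw [e]
          exact hqcaus (i - 1) (by rw [hPn] at hi; omega)
      have hnoanc : ¬ G.anc (l.getD t Wj) (l.getD (t - 1) Wj) :=
        topo_not_anc hl (by omega) ht
      have hPlast : P.last = q.vert q.n := by
        show P.vert P.n = q.vert q.n
        rw [hPn, hPvert (q.n + 1) (by omega)]
        simp
      have hlastO : P.last ∈ G.Oset A Y \ G.paSet (l.getD (t - 1) Wj) := by
        rw [hPlast]
        refine ⟨hqO, ?_⟩
        intro hmem
        exact hnoanc ((hqanc q.n (le_refl _)).trans (anc_of_edge hmem))
      have hblk := hnc (t - 1) (by omega) p hpW ⟨hpPa, hpt⟩ P hPfirst hlastO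
      rcases hblk with ⟨i, hi0, hin, _, hmem⟩ | ⟨i, hcol, _⟩
      · refine hnoanc ((hqanc (i - 1) ?_).trans (anc_of_edge ?_))
        · rw [hPn] at hin; omega
        · rw [← hPvert i (by omega)]; exact hmem
      · exact not_isCollider_of_causal hG hPcaus i hcol
  · exfalso
    rcases mem_adjSet_iff.mp (hnb t ht p hpW hpWj (topo_edge hl ht) hp') with h | h
    · exact hpPa h
    · exact hpCh h

/-- Cumulative version of `paChain`. -/
lemma paCum (hG : G.Acyclic) (hAY : A ≠ Y) (hA : G.anc A Y)
    (hWj : Wj ∈ G.Wset A Y \ G.Oset A Y)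
    (hl : G.IsTopoOrd (G.chSet Wj ∩ G.Wset A Y) l)
    (hna : Hna G Wj l) (hnb : Hnb G A Y Wj l) (hnc : Hnc G A Y Wj l) :
    ∀ t, t < l.length → ∀ p ∈ G.paSet (l.getD t Wj),
      p = Wj ∨ p ∈ G.paSet Wj ∨ ∃ u, u < t ∧ p = l.getD u Wj := by
  intro t
  induction t using Nat.strong_induction_on with
  | _ t ih =>
    intro ht p hp
    have h := paChain hG hAY hA hWj hl hna hnb hnc t ht p hp
    rcases Nat.eq_zero_or_pos t with h0 | h0
    · subst h0
      rcases Set.mem_insert_iff.mp h with h | h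
      · exact Or.inl h
      · exact Or.inr (Or.inl h)
    · have e : t = (t - 1) + 1 := by omega
      rw [e, chainD_succ] at h
      rcases Set.mem_insert_iff.mp h with h | h
      · exact Or.inr (Or.inr ⟨t - 1, by omega, h⟩)
      · rcases ih (t - 1) (by omega) (by omega) p h with h' | h' | ⟨u, hu, h'⟩
        · exact Or.inl h'
        · exact Or.inr (Or.inl h')
        · exact Or.inr (Or.inr ⟨u, by omega, h'⟩)

end Digraph
-- ===== end batch 4 =====

-- ===== batch 5 =====
namespace Digraph

variable {V : Type} {G : Digraph V} {A Y Wj : V} {l : List V}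

lemma mem_anOf {S : Set V} {x : V} : x ∈ G.anOf S ↔ ∃ v ∈ S, G.anc x v := by
  simp [anOf, anSet, Set.mem_iUnion]

lemma l_nonempty (hG : G.Acyclic) (hA : G.anc A Y)
    (hWj : Wj ∈ G.Wset A Y \ G.Oset A Y)
    (hl : G.IsTopoOrd (G.chSet Wj ∩ G.Wset A Y) l) : l ≠ [] := by
  have hav := W_avoid hWj.1
  have hWjY : Wj ≠ Y := fun h => hWj.1.1 (h ▸ hA)
  rcases Relation.ReflTransGen.cases_head hav with h | ⟨c, ⟨he, hWA, hcA⟩, hcy⟩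
  · exact absurd h hWjY
  · have hcY : G.anc c Y := avoidReach_anc hcy
    have hacn : ¬ G.anc A c := by
      intro hac
      exact hWj.2 (O_mem_intro hG ⟨hcA, hac, hcY⟩ he
        (fun hm => hWj.1.1 hm.2.1) (W_ne_A hWj.1))
    have hcW : c ∈ G.Wset A Y := ⟨hacn, hcY, fun h => h.2.2 hcy⟩
    have : c ∈ l := (topo_mem_iff hl).mpr ⟨he, hcW⟩
    intro h
    rw [h] at this
    simp at this

lemma chainD_last (hne : l ≠ []) : chainD Wj l l.length = l.getD (l.length - 1) Wj := by
  have hlen : 0 < l.length := List.length_pos_of_ne_nil hne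
  have e : l.length = (l.length - 1) + 1 := by omega
  rw [e, chainD_succ]
  simp

/-- Statement (iii) of the W-criterion from ¬(a), ¬(b), ¬(c). -/
lemma P3iii (hG : G.Acyclic) (hAY : A ≠ Y) (hA : G.anc A Y)
    (hWj : Wj ∈ G.Wset A Y \ G.Oset A Y)
    (hl : G.IsTopoOrd (G.chSet Wj ∩ G.Wset A Y) l)
    (hna : Hna G Wj l) (hnb : Hnb G A Y Wj l) (hnc : Hnc G A Y Wj l)
    (t : ℕ) (ht : t < l.length) :
    G.dsep (G.paSet (chainD Wj l t) \ G.paSet (chainD Wj l (t + 1))) (G.Oset A Y)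
      (G.paSet (chainD Wj l (t + 1))) := by
  intro x hx o ho q hqn hqf hql
  rw [chainD_succ] at hx ho ⊢
  have holst : q.last ∈ G.Oset A Y \ G.paSet (l.getD t Wj) := by
    rw [hql]; exact ⟨ho.1, ho.2⟩
  rcases Nat.eq_zero_or_pos t with h0 | h0
  · subst h0
    rw [chainD_zero] at hx
    have hxW : x ∈ G.Wset A Y := W_of_parent hx.1.1 hWj.1
    exact hnc 0 ht x hxW ⟨hx.1.1, hx.1.2⟩ q hqf holst
  · have hx1 : x ∈ G.paSet (l.getD (t - 1) Wj) := by
      have := hx.1.1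
      rwa [chainD_pred h0] at this
    rcases paCum hG hAY hA hWj hl hna hnb hnc (t - 1) (by omega) x hx1
      with h | h | ⟨u, hu, h⟩
    · exfalso
      refine hx.1.2 ?_
      rw [h]
      exact topo_edge hl ht
    · have hxW : x ∈ G.Wset A Y := W_of_parent hx1 (topo_mem_W hl (show t - 1 < l.length by omega))
      exact hnc t ht x hxW ⟨h, hx.1.2⟩ q hqf holst
    · exfalso
      refine hx.1.2 ?_
      rw [h]
      exact hna_edge hG hl hna (show u < t by omega) ht

/-- Statement (ii') of the W-criterion: the chain edges. -/
lemma P3i (hG : G.Acyclic) (hl : G.IsTopoOrd (G.chSet Wj ∩ G.Wset A Y) l)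
    (hna : Hna G Wj l) (t : ℕ) (ht : t < l.length) :
    G.Edge (chainD Wj l t) (chainD Wj l (t + 1)) := by
  rw [chainD_succ]
  rcases Nat.eq_zero_or_pos t with h0 | h0
  · subst h0; rw [chainD_zero]; exact topo_edge hl ht
  · rw [chainD_pred h0]
    exact hna_edge hG hl hna (show t - 1 < t by omega) ht

/-- The main d-separation statement of the W-criterion from ¬(a), ¬(b), ¬(c). -/
lemma P2 (hG : G.Acyclic) (hAY : A ≠ Y) (hA : G.anc A Y)
    (hWj : Wj ∈ G.Wset A Y \ G.Oset A Y)
    (hl : G.IsTopoOrd (G.chSet Wj ∩ G.Wset A Y) l)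
    (hna : Hna G Wj l) (hnb : Hnb G A Y Wj l) (hnc : Hnc G A Y Wj l)
    (hlne : l ≠ []) :
    G.dsep {Wj} (G.Oset A Y)
      (insert (l.getD (l.length - 1) Wj) (G.paSet (l.getD (l.length - 1) Wj)) \ {Wj}) := by
  have hlen : 0 < l.length := List.length_pos_of_ne_nil hlne
  set b := l.getD (l.length - 1) Wj with hb_def
  have hblen : l.length - 1 < l.length := by omega
  have hbW : b ∈ G.Wset A Y := topo_mem_W hl hblen
  have hAb : ¬ G.anc A b := hbW.1
  intro s hs o ho q hqn hqf hql
  have hsWj : s = Wj := hs.1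
  rw [hsWj] at hqf
  by_contra hnblk
  have hoO : o ∈ G.Oset A Y := ho.1
  have hOW : G.Oset A Y ⊆ G.Wset A Y := O_sub_W hG ()
  have hoWj : o ≠ Wj := fun h => hWj.2 (h ▸ hoO)
  have honb : o ∉ insert b (G.paSet b) := fun h => ho.2 ⟨h, by simp [hoWj]⟩
  have hq0 : q.vert 0 = Wj := hqf
  have hqlast : q.vert q.n = o := hql
  have hWj_pos : ∀ i, i ≤ q.n → q.vert i = Wj → i = 0 := fun i hi h =>
    q.inj i 0 hi (by omega) (by rw [h, hq0])
  have hlmem : ∀ s, s < l.length → l.getD s Wj ∈ insert b (G.paSet b) := by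
    intro s hs
    rcases Nat.lt_or_ge s (l.length - 1) with h | h
    · exact Set.mem_insert_of_mem _ (hna_edge hG hl hna h hblen)
    · have : s = l.length - 1 := by omega
      subst this
      exact Set.mem_insert _ _
  have HnotblkL : ∀ i, 0 < i → i < q.n → ¬ q.IsCollider i →
      q.vert i ∉ insert b (G.paSet b) := by
    intro i h0 hin hncol hmem
    refine hnblk (Or.inl ⟨i, h0, hin, hncol, ⟨hmem, ?_⟩⟩)
    intro h
    have := hWj_pos i (by omega) h
    omega
  have HcolAn : ∀ i, q.IsCollider i →
      q.vert i ∈ G.anOf (insert b (G.paSet b) \ {Wj}) := by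
    intro i hcol
    by_contra h
    exact hnblk (Or.inr ⟨i, hcol, h⟩)
  have Hb_nocol : ∀ i, q.IsCollider i → q.vert i ≠ b := by
    rintro i ⟨h0, hin, he1, he2⟩ heq
    rw [heq] at he2
    rcases Nat.lt_or_ge (i + 1) q.n with h | h
    · have hncol : ¬ q.IsCollider (i + 1) := by
        rintro ⟨_, _, he3, _⟩
        have he3' : G.Edge (q.vert i) (q.vert (i + 1)) := he3
        rw [heq] at he3'
        exact hG.no_two he3' he2
      exact HnotblkL (i + 1) (by omega) h hncol (Set.mem_insert_of_mem _ he2)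
    · have : i + 1 = q.n := by omega
      rw [this, hqlast] at he2
      exact honb (Set.mem_insert_of_mem _ he2)
  have HcolAnPa : ∀ i, q.IsCollider i → ∃ z ∈ G.paSet b, G.anc (q.vert i) z := by
    intro i hcol
    obtain ⟨u, hu, hanc⟩ := mem_anOf.mp (HcolAn i hcol)
    rcases Set.mem_insert_iff.mp hu.1 with h | h
    · subst h
      rcases Relation.ReflTransGen.cases_tail hanc with h | ⟨z, hz1, hz2⟩
      · exact absurd h.symm (Hb_nocol i hcol)
      · exact ⟨z, hz2, hz1⟩
    · exact ⟨u, h, hanc⟩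
  have HcolAncb : ∀ i, q.IsCollider i → G.anc (q.vert i) b := by
    intro i hcol
    obtain ⟨z, hz, hanc⟩ := HcolAnPa i hcol
    exact hanc.trans (anc_of_edge hz)
  have Hdrop : ∀ k, 0 < k → ∀ hk : k ≤ q.n, ¬ (q.dropPath k hk).Blocked (G.paSet b) := by
    intro k hk0 hk
    rintro (⟨i, hi0, hin, hncol, hmem⟩ | ⟨i, hcol, hnan⟩)
    · have hin' : i < q.n - k := hin
      have hq_ncol : ¬ q.IsCollider (k + i) :=
        fun hc => hncol ((isCollider_drop hk hi0).mpr hc)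
      have hmem' : q.vert (k + i) ∈ G.paSet b := hmem
      exact HnotblkL (k + i) (by omega) (by omega) hq_ncol (Set.mem_insert_of_mem _ hmem')
    · have hi0 : 0 < i := hcol.1
      have hq_col : q.IsCollider (k + i) := (isCollider_drop hk hi0).mp hcol
      obtain ⟨z, hz, hanc⟩ := HcolAnPa (k + i) hq_col
      exact hnan (mem_anOf.mpr ⟨z, hz, hanc⟩)
  -- case analysis on the first edge of q
  rcases q.adj 0 (by omega) with hfwd | hbwd
  case inr =>
    -- tail case : the first edge points into Wj
    have hv1Pa : G.Edge (q.vert 1) Wj := by rw [← hq0]; exact hbwd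
    have hv1W : q.vert 1 ∈ G.Wset A Y := W_of_parent hv1Pa hWj.1
    rcases Nat.lt_or_ge 1 q.n with h1n | h1n
    · -- q.n ≥ 2
      have hv1ncol : ¬ q.IsCollider 1 := by
        rintro ⟨_, _, he1, _⟩
        exact hG.no_two he1 hbwd
      have hv1nb := HnotblkL 1 (by omega) h1n hv1ncol
      have hv1npa : q.vert 1 ∉ G.paSet b := fun h => hv1nb (Set.mem_insert_of_mem _ h)
      have hblocked := hnc (l.length - 1) hblen (q.vert 1) hv1W ⟨hv1Pa, hv1npa⟩
        (q.dropPath 1 (by omega)) rfl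
        (by
          show q.vert (1 + (q.n - 1)) ∈ _
          have e : 1 + (q.n - 1) = q.n := by omega
          rw [e, hqlast]
          exact ⟨hoO, fun h => honb (Set.mem_insert_of_mem _ h)⟩)
      exact Hdrop 1 (by omega) (by omega) hblocked
    · -- q.n = 1, so o is a parent of Wj
      have h1 : q.n = 1 := by omega
      have hov : q.vert 1 = o := by rw [← h1, hqlast]
      rw [hov] at hv1Pa
      have honpa : o ∉ G.paSet b := fun h => honb (Set.mem_insert_of_mem _ h)
      have hblocked := hnc (l.length - 1) hblen o (hOW hoO) ⟨hv1Pa, honpa⟩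
        (G.zeroPath o) rfl ⟨hoO, honpa⟩
      exact not_blocked_of_le_one (Nat.zero_le 1) _ hblocked
  case inl =>
    -- head case : the first edge points out of Wj
    have hfwd' : G.Edge Wj (q.vert 1) := by rw [← hq0]; exact hfwd
    rcases Nat.lt_or_ge 1 q.n with h1n | h1n
    swap
    · -- q.n = 1 : o is a child of Wj in W, so o ∈ l, contradiction
      have h1 : q.n = 1 := by omega
      have hov : q.vert 1 = o := by rw [← h1, hqlast]
      rw [hov] at hfwd'
      obtain ⟨u, hu, huv⟩ := topo_index hl ((topo_mem_iff hl).mpr ⟨hfwd', hOW hoO⟩)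
      exact honb (huv ▸ hlmem u hu)
    · by_cases hdir : ∀ i, i < q.n → G.Edge (q.vert i) (q.vert (i + 1))
      · -- fully directed path
        have hanc1o : G.anc (q.vert 1) o := by
          have := rtg_of_causal q G.Edge (m := q.n) hdir 1 q.n (by omega) (le_refl _)
          rwa [hqlast] at this
        have hv1W : q.vert 1 ∈ G.Wset A Y :=
          W_of_anc_W hanc1o (hOW hoO) (fun h => (hOW hoO).1 (h.trans hanc1o))
        obtain ⟨u, hu, huv⟩ := topo_index hl ((topo_mem_iff hl).mpr ⟨hfwd', hv1W⟩)
        have hv1ncol : ¬ q.IsCollider 1 := by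
          rintro ⟨_, h2, _, he4⟩
          exact hG.no_two (hdir 1 h2) he4
        exact HnotblkL 1 (by omega) h1n hv1ncol (huv ▸ hlmem u hu)
      · push_neg at hdir
        obtain ⟨i₀, hi₀, hrev₀⟩ := hdir
        have hex : ∃ i, i < q.n ∧ ¬ G.Edge (q.vert i) (q.vert (i + 1)) := ⟨i₀, hi₀, hrev₀⟩
        classical
        set m := Nat.find hex with hm_def
        obtain ⟨hmn, hmrev⟩ := Nat.find_spec hex
        rw [← hm_def] at hmn hmrev
        have hfwd_below : ∀ i, i < m → G.Edge (q.vert i) (q.vert (i + 1)) := by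
          intro i hi
          by_contra h
          exact Nat.find_min hex hi ⟨by omega, h⟩
        have hm1 : 1 ≤ m := by
          rcases Nat.eq_zero_or_pos m with h | h
          · exfalso; rw [h] at hmrev; exact hmrev hfwd
          · exact h
        have hrev : G.Edge (q.vert (m + 1)) (q.vert m) := by
          rcases q.adj m hmn with h | h
          · exact absurd h hmrev
          · exact h
        have hcolm : q.IsCollider m := by
          refine ⟨by omega, hmn, ?_, hrev⟩
          have := hfwd_below (m - 1) (by omega)
          have e : m - 1 + 1 = m := by omega
          rwa [e] at this
        have hmanc_b : G.anc (q.vert m) b := HcolAncb m hcolm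
        have hanc1m : G.anc (q.vert 1) (q.vert m) :=
          rtg_of_causal q G.Edge (m := m) hfwd_below 1 m (by omega) (le_refl _)
        have hv1b : G.anc (q.vert 1) b := hanc1m.trans hmanc_b
        have hv1W : q.vert 1 ∈ G.Wset A Y :=
          W_of_anc_W hv1b hbW (fun h => hAb (h.trans hv1b))
        obtain ⟨s, hs, hsv⟩ := topo_index hl ((topo_mem_iff hl).mpr ⟨hfwd', hv1W⟩)
        rcases Nat.lt_or_ge 1 m with hm2 | hm2
        · -- m ≥ 2 : vert 1 is an interior non-collider in C, contradiction
          have hv1ncol : ¬ q.IsCollider 1 := by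
            rintro ⟨_, _, _, he4⟩
            exact hG.no_two (hfwd_below 1 hm2) he4
          exact HnotblkL 1 (by omega) h1n hv1ncol (hsv ▸ hlmem s hs)
        · -- m = 1 : vert 1 is a collider, analyze vert 2
          have hm1' : m = 1 := by omega
          rw [hm1'] at hrev
          have hv2pa : q.vert 2 ∈ G.paSet (l.getD s Wj) := by
            rw [hsv]; exact hrev
          have h2n : 2 ≤ q.n := by omega
          have hv2ncol : 2 < q.n → ¬ q.IsCollider 2 := by
            intro h2n'
            rintro ⟨_, _, he3, _⟩
            exact hG.no_two he3 hrev
          rcases paCum hG hAY hA hWj hl hna hnb hnc s hs (q.vert 2) hv2pa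
            with h2 | h2 | ⟨u, hu, h2⟩
          · have := hWj_pos 2 h2n h2
            omega
          · -- vert 2 ∈ Pa(Wj) : configuration (c)
            have hv2W : q.vert 2 ∈ G.Wset A Y := W_of_parent h2 hWj.1
            have hv2npa : q.vert 2 ∉ G.paSet b := by
              rcases Nat.lt_or_ge 2 q.n with h' | h'
              · intro hmem
                exact HnotblkL 2 (by omega) h' (hv2ncol h')
                  (Set.mem_insert_of_mem _ hmem)
              · have h2eq : (2:ℕ) = q.n := by omega
                rw [h2eq, hqlast]
                exact fun h => honb (Set.mem_insert_of_mem _ h)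
            have hblocked := hnc (l.length - 1) hblen (q.vert 2) hv2W ⟨h2, hv2npa⟩
              (q.dropPath 2 h2n) rfl
              (by
                show q.vert (2 + (q.n - 2)) ∈ _
                have e : 2 + (q.n - 2) = q.n := by omega
                rw [e, hqlast]
                exact ⟨hoO, fun h => honb (Set.mem_insert_of_mem _ h)⟩)
            exact Hdrop 2 (by omega) h2n hblocked
          · -- vert 2 = l[u] : blocked, contradiction
            have hmem : q.vert 2 ∈ insert b (G.paSet b) :=
              h2 ▸ hlmem u (by omega)
            rcases Nat.lt_or_ge 2 q.n with h' | h'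
            · exact HnotblkL 2 (by omega) h' (hv2ncol h') hmem
            · have h2eq : (2:ℕ) = q.n := by omega
              rw [h2eq, hqlast] at hmem
              exact honb hmem

end Digraph
-- ===== end batch 5 =====

end Causal

open Causal in
/-- If `W_j ∈ W(G) \ O(G)` fails the W-criterion, then one of the three
graphical configurations (a), (b), (c) holds in `G`. -/
theorem statement_13 {V : Type} [Fintype V]
    (G : Causal.Digraph V) (A Y : V) (hG : G.Acyclic) (hAY : A ≠ Y) (hA : G.anc A Y)
    (Wj : V) (hWj : Wj ∈ G.Wset A Y \ G.Oset A Y) (hfail : ¬ G.WCrit A Y Wj)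
    (l : List V) (hl : G.IsTopoOrd (G.chSet Wj ∩ G.Wset A Y) l) :
    (∃ s, s < l.length ∧ ∃ k, k < l.length ∧ s ≠ k ∧
      l.getD s Wj ∉ G.adjSet (l.getD k Wj)) ∨
    (∃ k, k < l.length ∧ ∃ Wi, Wi ∈ G.Wset A Y ∧ Wi ≠ Wj ∧
      G.Edge Wj (l.getD k Wj) ∧ G.Edge Wi (l.getD k Wj) ∧ Wi ∉ G.adjSet Wj) ∨
    (∃ k, k < l.length ∧ ∃ Wi, Wi ∈ G.Wset A Y ∧
      Wi ∈ G.paSet Wj \ G.paSet (l.getD k Wj) ∧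
      ∃ p : G.GPath, p.first = Wi ∧ p.last ∈ G.Oset A Y \ G.paSet (l.getD k Wj) ∧
        ¬ p.Blocked (G.paSet (l.getD k Wj))) := by
  by_contra hcon
  have hna : G.Hna Wj l := by
    intro s hs k hk hne
    by_contra h
    exact hcon (Or.inl ⟨s, hs, k, hk, hne, h⟩)
  have hnb : G.Hnb A Y Wj l := by
    intro k hk Wi h1 h2 h3 h4
    by_contra h
    exact hcon (Or.inr (Or.inl ⟨k, hk, Wi, h1, h2, h3, h4, h⟩))
  have hnc : G.Hnc A Y Wj l := by
    intro k hk Wi h1 h2 p hf hlst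
    by_contra h
    exact hcon (Or.inr (Or.inr ⟨k, hk, Wi, h1, h2, p, hf, hlst, h⟩))
  have hlne := Digraph.l_nonempty hG hA hWj hl
  refine hfail ?_
  intro l' hl'
  have hadj : ∀ a ∈ G.chSet Wj ∩ G.Wset A Y, ∀ b ∈ G.chSet Wj ∩ G.Wset A Y, a ≠ b →
      G.Edge a b ∨ G.Edge b a := by
    intro a ha b hb hab
    obtain ⟨sa, hsa, ha'⟩ :=
      Digraph.topo_index hl ((Digraph.topo_mem_iff hl).mpr ⟨ha.1, ha.2⟩)
    obtain ⟨sb, hsb, hb'⟩ :=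
      Digraph.topo_index hl ((Digraph.topo_mem_iff hl).mpr ⟨hb.1, hb.2⟩)
    have hne : sa ≠ sb := by rintro rfl; exact hab (ha'.symm.trans hb')
    have := hna sa hsa sb hsb hne
    rw [ha', hb'] at this
    exact Digraph.mem_adjSet_iff.mp this
  have hleq : l' = l := Digraph.topo_unique hG l' l _ hadj hl' hl
  subst hleq
  refine ⟨hlne, ?_, ?_⟩
  · rw [Digraph.chainD_last hlne]
    exact Digraph.P2 hG hAY hA hWj hl hna hnb hnc hlne
  · intro t ht
    refine ⟨Digraph.P3i hG hl hna t ht, ?_,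
      Digraph.P3iii hG hAY hA hWj hl hna hnb hnc t ht⟩
    rw [Digraph.chainD_succ]
    exact fun p hp => Digraph.paChain hG hAY hA hWj hl hna hnb hnc t ht p hp
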